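/- arXiv:0802.2887 — 3 statements merged into one kernel-verified Lean document; each statement's English description precedes it below -/
import Mathlib

section
/- Assume the n×n matrix (a^{ij}(p)) is invertible with inverse (a_{ij}(p)) and set a_i = ∑_s a_{is}·a^s. Then the matrix (g^{ij}(p)) = ((m−1)a^{ij} − (m−2)a^i a^j) is invertible and its inverse is given by g_{ij} = (1/(m−1))·a_{ij} + ((m−2)/(m−1))·a_i·a_j, i.e. ∑_s g_{is}·g^{sj} = δ_i^j for all i, j. -/
open Finset

noncomputable section

/-- `A(p) = ∑ a^{i₁…i_m} p_{i₁}⋯p_{i_m}`, where `m = M + 3 ≥ 3`. -/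
def Afun {n M : ℕ} (a : (Fin (M + 3) → Fin n) → ℝ) (p : Fin n → ℝ) : ℝ :=
  ∑ ι : Fin (M + 3) → Fin n, a ι * ∏ t, p (ι t)

/-- `K(p) = A(p)^{1/m}`. -/
def Kfun {n M : ℕ} (a : (Fin (M + 3) → Fin n) → ℝ) (p : Fin n → ℝ) : ℝ :=
  Afun a p ^ ((1 : ℝ) / (M + 3))

/-- `a^i = (∑ a^{i i₂…i_m} p_{i₂}⋯p_{i_m}) / K^{m-1}`. -/
def aU1 {n M : ℕ} (a : (Fin (M + 3) → Fin n) → ℝ) (i : Fin n) (p : Fin n → ℝ) : ℝ :=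
  (∑ ι : Fin (M + 2) → Fin n, a (Fin.cons i ι) * ∏ t, p (ι t)) / Kfun a p ^ (M + 2)

/-- `a^{ij} = (∑ a^{i j i₃…i_m} p_{i₃}⋯p_{i_m}) / K^{m-2}`. -/
def aU2 {n M : ℕ} (a : (Fin (M + 3) → Fin n) → ℝ) (i j : Fin n) (p : Fin n → ℝ) : ℝ :=
  (∑ ι : Fin (M + 1) → Fin n, a (Fin.cons i (Fin.cons j ι)) * ∏ t, p (ι t)) / Kfun a p ^ (M + 1)

/-- `a^{ijk} = (∑ a^{i j k i₄…i_m} p_{i₄}⋯p_{i_m}) / K^{m-3}`. -/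
def aU3 {n M : ℕ} (a : (Fin (M + 3) → Fin n) → ℝ) (i j k : Fin n) (p : Fin n → ℝ) : ℝ :=
  (∑ ι : Fin M → Fin n, a (Fin.cons i (Fin.cons j (Fin.cons k ι))) * ∏ t, p (ι t)) / Kfun a p ^ M

/-- Partial derivative `∂f/∂p_k` of a function of `p`. -/
def pd {n : ℕ} (f : (Fin n → ℝ) → ℝ) (k : Fin n) (p : Fin n → ℝ) : ℝ :=
  deriv (fun t => f (Function.update p k t)) (p k)

/-- Fundamental metrical d-tensor `g^{ij} = (1/2) ∂²(K²)/∂p_i∂p_j`. -/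
def gU {n M : ℕ} (a : (Fin (M + 3) → Fin n) → ℝ) (i j : Fin n) (p : Fin n → ℝ) : ℝ :=
  (1 / 2 : ℝ) * pd (fun q => pd (fun r => Kfun a r ^ 2) j q) i p

/-- Angular metrical d-tensor `h^{ij} = K ∂²K/∂p_i∂p_j`. -/
def hU {n M : ℕ} (a : (Fin (M + 3) → Fin n) → ℝ) (i j : Fin n) (p : Fin n → ℝ) : ℝ :=
  Kfun a p * pd (fun q => pd (Kfun a) j q) i p

/-- v-torsion d-tensor `C^{ijk} = -(1/2) ∂g^{ij}/∂p_k`. -/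
def CU {n M : ℕ} (a : (Fin (M + 3) → Fin n) → ℝ) (i j k : Fin n) (p : Fin n → ℝ) : ℝ :=
  -(1 / 2 : ℝ) * pd (gU a i j) k p

/-- Symmetry of `a` in all of its `m` indices. -/
def aSym {n M : ℕ} (a : (Fin (M + 3) → Fin n) → ℝ) : Prop :=
  ∀ (σ : Equiv.Perm (Fin (M + 3))) (ι : Fin (M + 3) → Fin n), a (ι ∘ σ) = a ι

/-- `a_i = ∑_s a_{is} a^s`, where `aLow` is the inverse matrix of `(a^{ij})`. -/
def aL {n M : ℕ} (a : (Fin (M + 3) → Fin n) → ℝ) (aLow : Matrix (Fin n) (Fin n) ℝ)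
    (p : Fin n → ℝ) (i : Fin n) : ℝ :=
  ∑ s, aLow i s * aU1 a s p

/-- `a_i^{jk} = ∑_s a_{is} a^{sjk}`. -/
def aL3 {n M : ℕ} (a : (Fin (M + 3) → Fin n) → ℝ) (aLow : Matrix (Fin n) (Fin n) ℝ)
    (p : Fin n → ℝ) (i j k : Fin n) : ℝ :=
  ∑ s, aLow i s * aU3 a s j k p

/-- `g_{ij} = (1/(m-1)) a_{ij} + ((m-2)/(m-1)) a_i a_j`, the inverse of `g^{ij}`. -/
def gL {n M : ℕ} (a : (Fin (M + 3) → Fin n) → ℝ) (aLow : Matrix (Fin n) (Fin n) ℝ)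
    (p : Fin n → ℝ) (i j : Fin n) : ℝ :=
  (1 / (M + 2 : ℝ)) * aLow i j + ((M + 1 : ℝ) / (M + 2)) * aL a aLow p i * aL a aLow p j

/-- v-derivation components `C_i^{jk} = ∑_s g_{is} C^{sjk}`. -/
def CL {n M : ℕ} (a : (Fin (M + 3) → Fin n) → ℝ) (aLow : Matrix (Fin n) (Fin n) ℝ)
    (p : Fin n → ℝ) (i j k : Fin n) : ℝ :=
  ∑ s, gL a aLow p i s * CU a s j k p

/-- v-curvature d-tensor `S^{hijk} = ∑_r (C_r^{ij} C^{rhk} - C_r^{ik} C^{rhj})`. -/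
def Scurv {n M : ℕ} (a : (Fin (M + 3) → Fin n) → ℝ) (aLow : Matrix (Fin n) (Fin n) ℝ)
    (p : Fin n → ℝ) (h i j k : Fin n) : ℝ :=
  ∑ r, (CL a aLow p r i j * CU a r h k p - CL a aLow p r i k * CU a r h j p)

/-- `U^{hijk} = ∑_r (a_r^{ij} a^{rhk} - a_r^{ik} a^{rhj})`. -/
def Ufun {n M : ℕ} (a : (Fin (M + 3) → Fin n) → ℝ) (aLow : Matrix (Fin n) (Fin n) ℝ)
    (p : Fin n → ℝ) (h i j k : Fin n) : ℝ :=
  ∑ r, (aL3 a aLow p r i j * aU3 a r h k p - aL3 a aLow p r i k * aU3 a r h j p)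

lemma sum_pi_succ {n k : ℕ} (f : (Fin (k + 1) → Fin n) → ℝ) :
    ∑ ι : Fin (k + 1) → Fin n, f ι =
      ∑ j : Fin n, ∑ κ : Fin k → Fin n, f (Fin.cons j κ) := by
  rw [← Equiv.sum_comp (Fin.consEquiv fun _ => Fin n) f, Fintype.sum_prod_type]
  rfl


lemma cons_swap {n M : ℕ} {a : (Fin (M + 3) → Fin n) → ℝ} (hsym : aSym a)
    (i j : Fin n) (ι : Fin (M + 1) → Fin n) :
    a (Fin.cons i (Fin.cons j ι)) = a (Fin.cons j (Fin.cons i ι)) := by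
  have := hsym (Equiv.swap 0 1) (Fin.cons j (Fin.cons i ι))
  rw [← this]
  congr 1
  funext t
  simp only [Function.comp_apply]
  refine Fin.cases ?_ (fun t => Fin.cases ?_ (fun t => ?_) t) t
  · simp [Equiv.swap_apply_left]
  · simp [Equiv.swap_apply_right]
  · rw [Equiv.swap_apply_of_ne_of_ne (by simp [Fin.succ_ne_zero])
      (Fin.succ_succ_ne_one _)]
    simp [Fin.cons_succ]

lemma aU2_symm {n M : ℕ} {a : (Fin (M + 3) → Fin n) → ℝ} (hsym : aSym a)
    (i j : Fin n) (p : Fin n → ℝ) : aU2 a i j p = aU2 a j i p := by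
  unfold aU2
  congr 1
  exact Finset.sum_congr rfl fun ι _ => by rw [cons_swap hsym]

lemma Kpos {n M : ℕ} {a : (Fin (M + 3) → Fin n) → ℝ} {p : Fin n → ℝ}
    (hA : 0 < Afun a p) : 0 < Kfun a p :=
  Real.rpow_pos_of_pos hA _

lemma Kpow {n M : ℕ} {a : (Fin (M + 3) → Fin n) → ℝ} {p : Fin n → ℝ}
    (hA : 0 < Afun a p) : Kfun a p ^ (M + 3) = Afun a p := by
  rw [Kfun, ← Real.rpow_natCast (Afun a p ^ ((1:ℝ)/(M+3))) (M+3), ← Real.rpow_mul hA.le]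
  push_cast
  rw [one_div_mul_eq_div, div_self (by positivity), Real.rpow_one]

/-- pure sum: peel one index. -/
lemma sum_T_p {n M : ℕ} (a : (Fin (M + 3) → Fin n) → ℝ) (p : Fin n → ℝ) (i : Fin n) :
    ∑ j, (∑ κ : Fin (M + 1) → Fin n, a (Fin.cons i (Fin.cons j κ)) * ∏ t, p (κ t)) * p j
      = ∑ ι : Fin (M + 2) → Fin n, a (Fin.cons i ι) * ∏ t, p (ι t) := by
  rw [sum_pi_succ (fun ι => a (Fin.cons i ι) * ∏ t, p (ι t))]
  refine Finset.sum_congr rfl fun j _ => ?_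
  rw [Finset.sum_mul]
  refine Finset.sum_congr rfl fun κ _ => ?_
  conv_rhs => rw [Fin.prod_univ_succ]
  simp only [Fin.cons_succ, Fin.cons_zero]
  ring

lemma sum_S_p {n M : ℕ} (a : (Fin (M + 3) → Fin n) → ℝ) (p : Fin n → ℝ) :
    ∑ j, (∑ κ : Fin (M + 2) → Fin n, a (Fin.cons j κ) * ∏ t, p (κ t)) * p j
      = Afun a p := by
  rw [Afun, sum_pi_succ (fun ι => a ι * ∏ t, p (ι t))]
  refine Finset.sum_congr rfl fun j _ => ?_
  rw [Finset.sum_mul]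
  refine Finset.sum_congr rfl fun κ _ => ?_
  conv_rhs => rw [Fin.prod_univ_succ]
  simp only [Fin.cons_succ, Fin.cons_zero]
  ring

lemma sum_aU2_p {n M : ℕ} {a : (Fin (M + 3) → Fin n) → ℝ} {p : Fin n → ℝ}
    (hA : 0 < Afun a p) (i : Fin n) :
    ∑ j, aU2 a i j p * p j = Kfun a p * aU1 a i p := by
  have hK := Kpos (M := M) (a := a) hA
  unfold aU2 aU1
  simp only [div_mul_eq_mul_div, ← Finset.sum_div, sum_T_p]
  field_simp
  ring

lemma sum_aU1_p {n M : ℕ} {a : (Fin (M + 3) → Fin n) → ℝ} {p : Fin n → ℝ}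
    (hA : 0 < Afun a p) :
    ∑ j, aU1 a j p * p j = Kfun a p := by
  have hK := Kpos (M := M) (a := a) hA
  unfold aU1
  simp only [div_mul_eq_mul_div, ← Finset.sum_div, sum_S_p]
  rw [← Kpow (M := M) hA, pow_succ, mul_comm, mul_div_assoc,
    div_self (pow_ne_zero _ hK.ne'), mul_one]

/-- the matrix `g^{ij} = (m-1)a^{ij} - (m-2)a^i a^j` is invertible with
inverse `g_{ij} = (1/(m-1)) a_{ij} + ((m-2)/(m-1)) a_i a_j`, i.e.
`∑_s g_{is} g^{sj} = δ_i^j` (and also `∑_s g^{is} g_{sj} = δ_i^j`). -/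
theorem stmt_4 {n M : ℕ} (hn : 4 ≤ n) (a : (Fin (M + 3) → Fin n) → ℝ)
    (hsym : aSym a) (p : Fin n → ℝ) (hA : 0 < Afun a p)
    (aLow : Matrix (Fin n) (Fin n) ℝ)
    (hInv₁ : (Matrix.of fun i j => aU2 a i j p) * aLow = 1)
    (hInv₂ : aLow * (Matrix.of fun i j => aU2 a i j p) = 1) :
    (∀ i j, ∑ s, gL a aLow p i s *
        ((M + 2 : ℝ) * aU2 a s j p - (M + 1 : ℝ) * (aU1 a s p * aU1 a j p)) =
        if i = j then (1 : ℝ) else 0) ∧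
    (∀ i j, ∑ s,
        ((M + 2 : ℝ) * aU2 a i s p - (M + 1 : ℝ) * (aU1 a i p * aU1 a s p)) *
          gL a aLow p s j =
        if i = j then (1 : ℝ) else 0) := by
  have hK := Kpos (M := M) (a := a) hA
  have E2 : ∀ i j, ∑ s, aLow i s * aU2 a s j p = if i = j then (1:ℝ) else 0 := by
    intro i j
    have := congrFun (congrFun hInv₂ i) j
    simpa [Matrix.mul_apply, Matrix.one_apply] using this
  have E1 : ∀ i j, ∑ s, aU2 a i s p * aLow s j = if i = j then (1:ℝ) else 0 := by
    intro i j
    have := congrFun (congrFun hInv₁ i) j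
    simpa [Matrix.mul_apply, Matrix.one_apply] using this
  -- symmetry of aLow
  have hBsymM : Matrix.transpose (Matrix.of fun i j => aU2 a i j p) = Matrix.of fun i j => aU2 a i j p := by
    ext i j
    simp only [Matrix.transpose_apply, Matrix.of_apply]
    exact aU2_symm hsym j i p
  have hLsymM : Matrix.transpose aLow = aLow := by
    calc Matrix.transpose aLow = Matrix.transpose aLow * 1 := by rw [Matrix.mul_one]
      _ = Matrix.transpose aLow * ((Matrix.of fun i j => aU2 a i j p) * aLow) := by rw [hInv₁]
      _ = (Matrix.transpose aLow * Matrix.transpose (Matrix.of fun i j => aU2 a i j p)) * aLow := by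
            rw [hBsymM, Matrix.mul_assoc]
      _ = Matrix.transpose ((Matrix.of fun i j => aU2 a i j p) * aLow) * aLow := by
            rw [Matrix.transpose_mul]
      _ = aLow := by rw [hInv₁, Matrix.transpose_one, Matrix.one_mul]
  have hLsym : ∀ i j, aLow i j = aLow j i := by
    intro i j
    conv_lhs => rw [← hLsymM]
    rw [Matrix.transpose_apply]
  -- derived identities
  have D1 : ∀ j, ∑ s, aL a aLow p s * aU2 a s j p = aU1 a j p := by
    intro j
    unfold aL
    simp only [Finset.sum_mul]
    rw [Finset.sum_comm]
    have inner : ∀ t, ∑ s, (aLow s t * aU1 a t p) * aU2 a s j p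
        = (if t = j then (1:ℝ) else 0) * aU1 a t p := by
      intro t
      rw [← E2 t j, Finset.sum_mul]
      exact Finset.sum_congr rfl fun s _ => by rw [hLsym s t]; ring
    rw [Finset.sum_congr rfl fun t _ => inner t]
    simp
  have D1' : ∀ i, ∑ s, aU2 a i s p * aL a aLow p s = aU1 a i p := by
    intro i
    rw [← D1 i]
    exact Finset.sum_congr rfl fun s _ => by rw [aU2_symm hsym i s]; ring
  have Dv : ∀ j, ∑ s, aU1 a s p * aLow s j = aL a aLow p j := by
    intro j
    unfold aL
    exact Finset.sum_congr rfl fun s _ => by rw [hLsym s j]; ring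
  have D2 : ∑ s, aL a aLow p s * aU1 a s p = 1 := by
    have h2 : Kfun a p * ∑ s, aL a aLow p s * aU1 a s p = Kfun a p := by
      rw [Finset.mul_sum]
      calc ∑ s, Kfun a p * (aL a aLow p s * aU1 a s p)
          = ∑ s, ∑ j, aL a aLow p s * aU2 a s j p * p j := by
            refine Finset.sum_congr rfl fun s _ => ?_
            rw [show Kfun a p * (aL a aLow p s * aU1 a s p)
                = aL a aLow p s * (Kfun a p * aU1 a s p) from by ring,
              ← sum_aU2_p hA s, Finset.mul_sum]
            exact Finset.sum_congr rfl fun j _ => (mul_assoc _ _ _).symm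
        _ = ∑ j, (∑ s, aL a aLow p s * aU2 a s j p) * p j := by
            rw [Finset.sum_comm]
            exact Finset.sum_congr rfl fun j _ => by rw [Finset.sum_mul]
        _ = ∑ j, aU1 a j p * p j := by simp only [D1]
        _ = Kfun a p := sum_aU1_p hA
    have := mul_left_cancel₀ hK.ne' (by rw [h2, mul_one] :
      Kfun a p * ∑ s, aL a aLow p s * aU1 a s p = Kfun a p * 1)
    simpa using this
  have hm : (M + 2 : ℝ) ≠ 0 := by positivity
  constructor
  · intro i j
    have expand : ∀ s, gL a aLow p i s *
        ((M + 2 : ℝ) * aU2 a s j p - (M + 1 : ℝ) * (aU1 a s p * aU1 a j p)) =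
        (aLow i s * aU2 a s j p)
        + (-((M+1:ℝ)/(M+2) * aU1 a j p)) * (aLow i s * aU1 a s p)
        + ((M+1:ℝ) * aL a aLow p i) * (aL a aLow p s * aU2 a s j p)
        + (-((M+1:ℝ)*(M+1)/(M+2) * aL a aLow p i * aU1 a j p)) * (aL a aLow p s * aU1 a s p) := by
      intro s
      rw [gL]
      field_simp
      ring
    rw [Finset.sum_congr rfl fun s _ => expand s]
    simp only [Finset.sum_add_distrib, ← Finset.mul_sum]
    rw [E2 i j, show ∑ s, aLow i s * aU1 a s p = aL a aLow p i from rfl, D1 j, D2]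
    set d := if i = j then (1:ℝ) else 0
    field_simp
    ring
  · intro i j
    have expand : ∀ s,
        ((M + 2 : ℝ) * aU2 a i s p - (M + 1 : ℝ) * (aU1 a i p * aU1 a s p)) *
          gL a aLow p s j =
        (aU2 a i s p * aLow s j)
        + ((M+1:ℝ) * aL a aLow p j) * (aU2 a i s p * aL a aLow p s)
        + (-((M+1:ℝ)/(M+2) * aU1 a i p)) * (aU1 a s p * aLow s j)
        + (-((M+1:ℝ)*(M+1)/(M+2) * aU1 a i p * aL a aLow p j)) * (aU1 a s p * aL a aLow p s) := by
      intro s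
      rw [gL]
      field_simp
      ring
    rw [Finset.sum_congr rfl fun s _ => expand s]
    simp only [Finset.sum_add_distrib, ← Finset.mul_sum]
    have D2' : ∑ s, aU1 a s p * aL a aLow p s = 1 := by
      rw [← D2]; exact Finset.sum_congr rfl fun s _ => mul_comm _ _
    rw [E1 i j, D1' i, Dv j, D2']
    set d := if i = j then (1:ℝ) else 0
    field_simp
    ring
end
end

section
/- For all indices i, j, k one has C^{ijk}(p) = −((m−1)(m−2)/(2K))·(a^{ijk} − a^{ij}a^k − a^{jk}a^i − a^{ki}a^j + 2a^i a^j a^k). -/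
open Finset

noncomputable section

def Sfun {n N : ℕ} (c : (Fin N → Fin n) → ℝ) (p : Fin n → ℝ) : ℝ :=
  ∑ ι : Fin N → Fin n, c ι * ∏ t, p (ι t)

def SymC {n N : ℕ} (c : (Fin N → Fin n) → ℝ) : Prop :=
  ∀ (σ : Equiv.Perm (Fin N)) (ι : Fin N → Fin n), c (ι ∘ σ) = c ι

lemma cons_comp_ext {α : Type*} {N : ℕ} (x : α) (f : Fin N → α) (σ : Equiv.Perm (Fin N)) :
    Fin.cons x f ∘ (Equiv.Perm.decomposeFin.symm (0, σ)) = Fin.cons x (f ∘ σ) := by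
  funext t
  refine Fin.cases ?_ (fun s => ?_) t <;>
    simp [Equiv.Perm.decomposeFin_symm_apply_zero, Equiv.Perm.decomposeFin_symm_apply_succ]

lemma SymC.cons {n N : ℕ} {c : (Fin (N+1) → Fin n) → ℝ} (hc : SymC c) (x : Fin n) :
    SymC (fun ι => c (Fin.cons x ι)) := by
  intro σ ι
  show c (Fin.cons x (ι ∘ σ)) = c (Fin.cons x ι)
  rw [← cons_comp_ext, hc]

lemma SymC.cons_comm {n N : ℕ} {c : (Fin (N+2) → Fin n) → ℝ} (hc : SymC c)
    (x y : Fin n) (ι : Fin N → Fin n) :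
    c (Fin.cons x (Fin.cons y ι)) = c (Fin.cons y (Fin.cons x ι)) := by
  have h : (Fin.cons y (Fin.cons x ι)) ∘ (Equiv.swap (0 : Fin (N+2)) 1)
      = Fin.cons x (Fin.cons y ι) := by
    funext t
    refine Fin.cases ?_ (fun s => ?_) t
    · rw [Function.comp_apply, Equiv.swap_apply_left, Fin.cons_zero, ← Fin.succ_zero_eq_one,
        Fin.cons_succ, Fin.cons_zero]
    · refine Fin.cases ?_ (fun u => ?_) s
      · rw [Function.comp_apply, Fin.succ_zero_eq_one, Equiv.swap_apply_right, Fin.cons_zero,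
          ← Fin.succ_zero_eq_one, Fin.cons_succ, Fin.cons_zero]
      · rw [Function.comp_apply, Equiv.swap_apply_of_ne_of_ne (Fin.succ_ne_zero _)
          (fun h => Fin.succ_ne_zero u (Fin.succ_injective _ (by rw [Fin.succ_zero_eq_one]; exact h)))]
        simp
  rw [← h, hc]

lemma insertNth_eq_cons_comp {α : Type*} {N : ℕ} (s : Fin (N+1)) (x : α) (f : Fin N → α) :
    s.insertNth x f = (Fin.cons x f) ∘ ((finSuccEquiv' s).trans (finSuccEquiv N).symm) := by
  funext t
  refine Fin.succAboveCases (i := s) ?_ ?_ t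
  · simp [finSuccEquiv'_at]
  · intro i; simp [finSuccEquiv'_succAbove]

lemma prod_erase_eq {β : Type*} [CommMonoid β] {N : ℕ} (s : Fin (N+1)) (f : Fin (N+1) → β) :
    ∏ t ∈ Finset.univ.erase s, f t = ∏ i : Fin N, f (s.succAbove i) :=
  (Finset.prod_bij (fun i _ => s.succAbove i)
    (fun i _ => Finset.mem_erase.2 ⟨Fin.succAbove_ne s i, Finset.mem_univ _⟩)
    (fun a _ b _ h => Fin.succAbove_right_injective h)
    (fun b hb => ⟨(Fin.exists_succAbove_eq (Finset.ne_of_mem_erase hb)).choose,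
      Finset.mem_univ _, (Fin.exists_succAbove_eq (Finset.ne_of_mem_erase hb)).choose_spec⟩)
    (fun _ _ => rfl)).symm

lemma hasDerivAt_Sfun {n N : ℕ} {c : (Fin (N+1) → Fin n) → ℝ} (hc : SymC c)
    (k : Fin n) (p : Fin n → ℝ) :
    HasDerivAt (fun x => Sfun c (Function.update p k x))
      (((N:ℝ)+1) * Sfun (fun ι => c (Fin.cons k ι)) p) (p k) := by
  have hterm : ∀ ι : Fin (N+1) → Fin n,
      HasDerivAt (fun x => c ι * ∏ t, Function.update p k x (ι t))
        (c ι * ∑ s : Fin (N+1), (∏ t ∈ Finset.univ.erase s, p (ι t)) *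
          (if ι s = k then (1:ℝ) else 0)) (p k) := by
    intro ι
    have h1 : ∀ s : Fin (N+1),
        HasDerivAt (fun x => Function.update p k x (ι s))
          (if ι s = k then (1:ℝ) else 0) (p k) := by
      intro s
      by_cases h : ι s = k
      · have hfun : (fun x : ℝ => Function.update p k x (ι s)) = fun x => x := by
          funext x; rw [h, Function.update_self]
        rw [hfun, if_pos h]; exact hasDerivAt_id (p k)
      · simpa [h, Function.update_of_ne h] using hasDerivAt_const (p k) (p (ι s))
    have h2 := HasDerivAt.fun_finsetProd (u := Finset.univ)
      (f := fun t x => Function.update p k x (ι t))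
      (f' := fun t => if ι t = k then (1:ℝ) else 0) (fun s _ => h1 s)
    simp only [Function.update_eq_self, smul_eq_mul] at h2
    exact h2.const_mul (c ι)
  have hsum := HasDerivAt.fun_sum (fun ι (_ : ι ∈ Finset.univ) => hterm ι)
  have key : ∀ s : Fin (N+1),
      (∑ ι : Fin (N+1) → Fin n, c ι * ((∏ t ∈ Finset.univ.erase s, p (ι t)) *
        (if ι s = k then (1:ℝ) else 0))) = Sfun (fun ι => c (Fin.cons k ι)) p := by
    intro s
    have e_apply : ∀ (y : Fin n) (ι' : Fin N → Fin n),
        (Fin.insertNthEquiv (fun _ => Fin n) s) (y, ι') = s.insertNth y ι' := fun _ _ => rfl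
    rw [← Equiv.sum_comp (Fin.insertNthEquiv (fun _ => Fin n) s), Fintype.sum_prod_type,
      Finset.sum_comm]
    simp only [e_apply, Fin.insertNth_apply_same, mul_ite, mul_one, mul_zero,
      Finset.sum_ite_eq', Finset.mem_univ, if_true]
    unfold Sfun
    refine Finset.sum_congr rfl (fun ι' _ => ?_)
    have h1 : c (s.insertNth k ι') = c (Fin.cons k ι') := by
      rw [insertNth_eq_cons_comp]; exact hc _ _
    rw [h1, prod_erase_eq]
    congr 1
    refine Finset.prod_congr rfl (fun t _ => ?_)
    rw [Fin.insertNth_apply_succAbove]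
  have hval : (∑ ι : Fin (N+1) → Fin n, c ι * ∑ s : Fin (N+1),
      (∏ t ∈ Finset.univ.erase s, p (ι t)) * (if ι s = k then (1:ℝ) else 0))
      = ((N:ℝ)+1) * Sfun (fun ι => c (Fin.cons k ι)) p := by
    simp only [Finset.mul_sum]
    rw [Finset.sum_comm]
    rw [Finset.sum_congr rfl (fun s _ => key s), Finset.sum_const, Finset.card_univ,
      Fintype.card_fin, nsmul_eq_mul]
    push_cast
    ring
  rw [← hval]
  exact hsum

def B1 {n M : ℕ} (a : (Fin (M + 3) → Fin n) → ℝ) (i : Fin n) (p : Fin n → ℝ) : ℝ :=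
  Sfun (fun ι => a (Fin.cons i ι)) p

def B2 {n M : ℕ} (a : (Fin (M + 3) → Fin n) → ℝ) (i j : Fin n) (p : Fin n → ℝ) : ℝ :=
  Sfun (fun ι => a (Fin.cons i (Fin.cons j ι))) p

def B3 {n M : ℕ} (a : (Fin (M + 3) → Fin n) → ℝ) (i j k : Fin n) (p : Fin n → ℝ) : ℝ :=
  Sfun (fun ι => a (Fin.cons i (Fin.cons j (Fin.cons k ι)))) p

section Analytic
variable {n M : ℕ} {a : (Fin (M + 3) → Fin n) → ℝ} {p q : Fin n → ℝ}

lemma aSym.symC (hsym : aSym a) : SymC a := hsym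

lemma B2_comm (hsym : aSym a) (i j : Fin n) (q : Fin n → ℝ) : B2 a i j q = B2 a j i q :=
  Finset.sum_congr rfl fun ι _ => by
    show a (Fin.cons i (Fin.cons j ι)) * _ = a (Fin.cons j (Fin.cons i ι)) * _
    rw [SymC.cons_comm hsym.symC]

-- derivative of Sfun along a coordinate line, at an arbitrary point of the line
lemma hasDerivAt_Sfun' {N : ℕ} {c : (Fin (N+1) → Fin n) → ℝ} (hc : SymC c)
    (k : Fin n) (p : Fin n → ℝ) (x₀ : ℝ) :
    HasDerivAt (fun x => Sfun c (Function.update p k x))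
      (((N:ℝ)+1) * Sfun (fun ι => c (Fin.cons k ι)) (Function.update p k x₀)) x₀ := by
  have h := hasDerivAt_Sfun hc k (Function.update p k x₀)
  simp only [Function.update_idem, Function.update_self] at h
  exact h

lemma hasDerivAt_A (hsym : aSym a) (k : Fin n) (q : Fin n → ℝ) :
    HasDerivAt (fun x => Afun a (Function.update q k x)) (((M:ℝ)+3) * B1 a k q) (q k) := by
  have h := hasDerivAt_Sfun (N := M+2) hsym.symC k q
  convert h using 2
  · rfl
  · push_cast; ring
  · rfl

lemma eventually_pos (hsym : aSym a) (hq : 0 < Afun a q) (k : Fin n) :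
    ∀ᶠ x in nhds (q k), 0 < Afun a (Function.update q k x) := by
  have hcont : ContinuousAt (fun x => Afun a (Function.update q k x)) (q k) :=
    (hasDerivAt_A hsym k q).continuousAt
  exact hcont.tendsto.eventually (eventually_gt_nhds
    (show (0:ℝ) < Afun a (Function.update q k (q k)) by rwa [Function.update_eq_self]))

lemma hasDerivAt_K2 (hsym : aSym a) (hq : 0 < Afun a q) (j : Fin n) :
    HasDerivAt (fun x => Kfun a (Function.update q j x) ^ 2)
      (2 * Afun a q ^ ((2:ℝ)/(M+3) - 1) * B1 a j q) (q j) := by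
  have hF := hasDerivAt_A hsym j q
  have hne : Afun a (Function.update q j (q j)) ≠ 0 := by
    rw [Function.update_eq_self]; exact ne_of_gt hq
  have h2 := hF.rpow_const (p := (2:ℝ)/(M+3)) (Or.inl hne)
  simp only [Function.update_eq_self] at h2
  have heq : (fun x => Kfun a (Function.update q j x) ^ 2)
      =ᶠ[nhds (q j)] fun x => Afun a (Function.update q j x) ^ ((2:ℝ)/(M+3)) := by
    filter_upwards [eventually_pos hsym hq j] with x hx
    show Kfun a (Function.update q j x) ^ 2 = _
    rw [Kfun, ← Real.rpow_natCast (Afun a (Function.update q j x) ^ ((1:ℝ)/(M+3))) 2,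
      ← Real.rpow_mul hx.le]
    congr 1
    ring
  refine HasDerivAt.congr_of_eventuallyEq ?_ heq
  refine h2.congr_deriv ?_
  have hm : ((M:ℝ)+3) ≠ 0 := by positivity
  field_simp

lemma pdK2_eq (hsym : aSym a) (hq : 0 < Afun a q) (j : Fin n) :
    pd (fun r => Kfun a r ^ 2) j q = 2 * Afun a q ^ ((2:ℝ)/(M+3) - 1) * B1 a j q :=
  (hasDerivAt_K2 hsym hq j).deriv

lemma hasDerivAt_pdK2 (hsym : aSym a) (hq : 0 < Afun a q) (i j : Fin n) :
    HasDerivAt (fun x => pd (fun r => Kfun a r ^ 2) j (Function.update q i x))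
      (2*(2 - ((M:ℝ)+3)) * Afun a q ^ ((2:ℝ)/(M+3) - 1 - 1) * B1 a i q * B1 a j q
        + 2*((M:ℝ)+2) * Afun a q ^ ((2:ℝ)/(M+3) - 1) * B2 a i j q) (q i) := by
  have hF := hasDerivAt_A hsym i q
  have hne : Afun a (Function.update q i (q i)) ≠ 0 := by
    rw [Function.update_eq_self]; exact ne_of_gt hq
  have hrpow := hF.rpow_const (p := (2:ℝ)/(M+3) - 1) (Or.inl hne)
  simp only [Function.update_eq_self] at hrpow
  have hB1 : HasDerivAt (fun x => B1 a j (Function.update q i x))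
      (((((M+1:ℕ)):ℝ)+1) * (B2 a j i q)) (q i) := by
    have h := hasDerivAt_Sfun (SymC.cons hsym.symC j) i q
    exact h
  rw [B2_comm hsym j i] at hB1
  have hmul := (hrpow.mul hB1).const_mul (2:ℝ)
  simp only [Function.update_eq_self] at hmul
  have heq : (fun x => pd (fun r => Kfun a r ^ 2) j (Function.update q i x))
      =ᶠ[nhds (q i)] (fun x => 2 * (Afun a (Function.update q i x) ^ ((2:ℝ)/(M+3) - 1)
        * B1 a j (Function.update q i x))) := by
    filter_upwards [eventually_pos hsym hq i] with x hx
    rw [pdK2_eq hsym hx j]; ring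
  refine HasDerivAt.congr_of_eventuallyEq ?_ heq
  refine hmul.congr_deriv ?_
  have hm : ((M:ℝ)+3) ≠ 0 := by positivity
  push_cast
  field_simp
  ring

lemma gU_eq (hsym : aSym a) (hq : 0 < Afun a q) (i j : Fin n) :
    gU a i j q = (2 - ((M:ℝ)+3)) * Afun a q ^ ((2:ℝ)/(M+3) - 1 - 1) * B1 a i q * B1 a j q
      + ((M:ℝ)+2) * Afun a q ^ ((2:ℝ)/(M+3) - 1) * B2 a i j q := by
  have h2 : pd (fun r => pd (fun r' => Kfun a r' ^ 2) j r) i q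
      = 2*(2 - ((M:ℝ)+3)) * Afun a q ^ ((2:ℝ)/(M+3) - 1 - 1) * B1 a i q * B1 a j q
        + 2*((M:ℝ)+2) * Afun a q ^ ((2:ℝ)/(M+3) - 1) * B2 a i j q :=
    (hasDerivAt_pdK2 hsym hq i j).deriv
  unfold gU
  rw [h2]
  ring

lemma hasDerivAt_gU (hsym : aSym a) (hq : 0 < Afun a q) (i j k : Fin n) :
    HasDerivAt (fun x => gU a i j (Function.update q k x))
      (2*((M:ℝ)+2)*((M:ℝ)+1) * Afun a q ^ ((2:ℝ)/(M+3) - 1 - 1 - 1)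
          * (B1 a i q * B1 a j q * B1 a k q)
        - ((M:ℝ)+2)*((M:ℝ)+1) * Afun a q ^ ((2:ℝ)/(M+3) - 1 - 1) *
            (B2 a i k q * B1 a j q + B2 a j k q * B1 a i q + B2 a i j q * B1 a k q)
        + ((M:ℝ)+2)*((M:ℝ)+1) * Afun a q ^ ((2:ℝ)/(M+3) - 1) * B3 a i j k q) (q k) := by
  have hF := hasDerivAt_A hsym k q
  have hne : Afun a (Function.update q k (q k)) ≠ 0 := by
    rw [Function.update_eq_self]; exact ne_of_gt hq
  have hr2 := hF.rpow_const (p := (2:ℝ)/(M+3) - 1 - 1) (Or.inl hne)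
  have hr1 := hF.rpow_const (p := (2:ℝ)/(M+3) - 1) (Or.inl hne)
  simp only [Function.update_eq_self] at hr2 hr1
  have hB1i : HasDerivAt (fun x => B1 a i (Function.update q k x))
      (((((M+1:ℕ)):ℝ)+1) * (B2 a i k q)) (q k) := hasDerivAt_Sfun (SymC.cons hsym.symC i) k q
  have hB1j : HasDerivAt (fun x => B1 a j (Function.update q k x))
      (((((M+1:ℕ)):ℝ)+1) * (B2 a j k q)) (q k) := hasDerivAt_Sfun (SymC.cons hsym.symC j) k q
  have hB2ij : HasDerivAt (fun x => B2 a i j (Function.update q k x))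
      ((((M:ℕ):ℝ)+1) * (B3 a i j k q)) (q k) :=
    hasDerivAt_Sfun (SymC.cons (SymC.cons hsym.symC i) j) k q
  have hterm := ((hr2.mul (hB1i.mul hB1j)).const_mul (2 - ((M:ℝ)+3))).add
    ((hr1.mul hB2ij).const_mul ((M:ℝ)+2))
  simp only [Function.update_eq_self] at hterm
  have heq : (fun x => gU a i j (Function.update q k x))
      =ᶠ[nhds (q k)] (fun x =>
        (2 - ((M:ℝ)+3)) * (Afun a (Function.update q k x) ^ ((2:ℝ)/(M+3) - 1 - 1)
          * (B1 a i (Function.update q k x) * B1 a j (Function.update q k x)))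
        + ((M:ℝ)+2) * (Afun a (Function.update q k x) ^ ((2:ℝ)/(M+3) - 1)
          * B2 a i j (Function.update q k x))) := by
    filter_upwards [eventually_pos hsym hq k] with x hx
    rw [gU_eq hsym hx i j]; ring
  refine HasDerivAt.congr_of_eventuallyEq ?_ heq
  refine hterm.congr_deriv ?_
  simp only [Pi.mul_apply, Function.update_eq_self]
  have hm : ((M:ℝ)+3) ≠ 0 := by positivity
  push_cast
  field_simp
  ring

end Analytic

/-- `C^{ijk} = -((m-1)(m-2)/(2K)) (a^{ijk} - a^{ij}a^k - a^{jk}a^i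
- a^{ki}a^j + 2 a^i a^j a^k)`, where `m = M + 3`. -/
theorem stmt_5 {n M : ℕ} (hn : 4 ≤ n) (a : (Fin (M + 3) → Fin n) → ℝ)
    (hsym : aSym a) (p : Fin n → ℝ) (hA : 0 < Afun a p) :
    ∀ i j k : Fin n,
      CU a i j k p = -((M + 2 : ℝ) * (M + 1) / (2 * Kfun a p)) *
        (aU3 a i j k p - aU2 a i j p * aU1 a k p - aU2 a j k p * aU1 a i p -
          aU2 a k i p * aU1 a j p + 2 * (aU1 a i p * aU1 a j p * aU1 a k p)) := by
  intro i j k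
  have hm : ((M:ℝ)+3) ≠ 0 := by positivity
  have hK : 0 < Kfun a p := Real.rpow_pos_of_pos hA _
  have hC : pd (gU a i j) k p
      = 2*((M:ℝ)+2)*((M:ℝ)+1) * Afun a p ^ ((2:ℝ)/(M+3) - 1 - 1 - 1)
          * (B1 a i p * B1 a j p * B1 a k p)
        - ((M:ℝ)+2)*((M:ℝ)+1) * Afun a p ^ ((2:ℝ)/(M+3) - 1 - 1) *
            (B2 a i k p * B1 a j p + B2 a j k p * B1 a i p + B2 a i j p * B1 a k p)
        + ((M:ℝ)+2)*((M:ℝ)+1) * Afun a p ^ ((2:ℝ)/(M+3) - 1) * B3 a i j k p :=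
    (hasDerivAt_gU hsym hA i j k).deriv
  have e1i : aU1 a i p = B1 a i p / Kfun a p ^ (M+2) := rfl
  have e1j : aU1 a j p = B1 a j p / Kfun a p ^ (M+2) := rfl
  have e1k : aU1 a k p = B1 a k p / Kfun a p ^ (M+2) := rfl
  have e2ij : aU2 a i j p = B2 a i j p / Kfun a p ^ (M+1) := rfl
  have e2jk : aU2 a j k p = B2 a j k p / Kfun a p ^ (M+1) := rfl
  have e2ki : aU2 a k i p = B2 a i k p / Kfun a p ^ (M+1) := by
    rw [show aU2 a k i p = B2 a k i p / Kfun a p ^ (M+1) from rfl, B2_comm hsym k i]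
  have e3 : aU3 a i j k p = B3 a i j k p / Kfun a p ^ M := rfl
  have hKpow : ∀ r : ℕ, (Kfun a p) ^ r = Afun a p ^ ((r:ℝ)/(M+3)) := fun r => by
    rw [Kfun, ← Real.rpow_natCast (Afun a p ^ ((1:ℝ)/(M+3))) r, ← Real.rpow_mul hA.le]
    congr 1; ring
  have hx1 : Afun a p ^ ((2:ℝ)/(M+3) - 1) = (Kfun a p ^ (M+1))⁻¹ := by
    rw [hKpow (M+1), ← Real.rpow_neg hA.le]
    congr 1; push_cast; field_simp; ring
  have hx2 : Afun a p ^ ((2:ℝ)/(M+3) - 1 - 1) = (Kfun a p ^ (2*M+4))⁻¹ := by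
    rw [hKpow (2*M+4), ← Real.rpow_neg hA.le]
    congr 1; push_cast; field_simp; ring
  have hx3 : Afun a p ^ ((2:ℝ)/(M+3) - 1 - 1 - 1) = (Kfun a p ^ (3*M+7))⁻¹ := by
    rw [hKpow (3*M+7), ← Real.rpow_neg hA.le]
    congr 1; push_cast; field_simp; ring
  rw [CU, hC, e1i, e1j, e1k, e2ij, e2jk, e2ki, e3, hx1, hx2, hx3]
  have hKne : Kfun a p ≠ 0 := ne_of_gt hK
  field_simp
  ring
end
end

section
/- For all indices h, i, j, k one has K²·S^{hijk} = ((m−2)²/4)·[ (h^{hj}h^{ik} − h^{hk}h^{ij})/(m−1) + (m−1)·U^{hijk} ], where U^{hijk} = ∑_r (a_r^{ij}a^{rhk} − a_r^{ik}a^{rhj}). -/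
open Finset

noncomputable section

namespace Stmt9
variable {n : ℕ}

def SS {r : ℕ} (c : (Fin r → Fin n) → ℝ) (p : Fin n → ℝ) : ℝ :=
  ∑ ι : Fin r → Fin n, c ι * ∏ t, p (ι t)

def Sym {r : ℕ} (c : (Fin r → Fin n) → ℝ) : Prop :=
  ∀ (σ : Equiv.Perm (Fin r)) (ι : Fin r → Fin n), c (ι ∘ σ) = c ι

lemma sum_pi_succ {r : ℕ} (g : (Fin (r+1) → Fin n) → ℝ) :
    ∑ f : Fin (r+1) → Fin n, g f = ∑ x : Fin n, ∑ f : Fin r → Fin n, g (Fin.cons x f) := by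
  rw [Fintype.sum_equiv (Fin.consEquiv fun _ => Fin n).symm g (fun q => g (Fin.cons q.1 q.2))
    (fun f => by simp [Fin.consEquiv]), Fintype.sum_prod_type]

lemma SS_cons {r : ℕ} (c : (Fin (r+1) → Fin n) → ℝ) (p : Fin n → ℝ) :
    SS c p = ∑ i, p i * SS (fun ι => c (Fin.cons i ι)) p := by
  rw [SS, sum_pi_succ]
  refine Finset.sum_congr rfl fun i _ => ?_
  rw [SS, Finset.mul_sum]
  refine Finset.sum_congr rfl fun ι _ => ?_
  rw [Fin.prod_univ_succ]
  simp only [Fin.cons_zero, Fin.cons_succ]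
  ring

/-- lift a permutation of `Fin r` to one of `Fin (r+1)` fixing `0`. -/
def liftPerm {r : ℕ} (τ : Equiv.Perm (Fin r)) : Equiv.Perm (Fin (r+1)) where
  toFun := Fin.cons 0 (Fin.succ ∘ τ)
  invFun := Fin.cons 0 (Fin.succ ∘ τ.symm)
  left_inv := by
    intro x
    refine Fin.cases ?_ (fun y => ?_) x <;> simp
  right_inv := by
    intro x
    refine Fin.cases ?_ (fun y => ?_) x <;> simp

lemma cons_comp_liftPerm {r : ℕ} (τ : Equiv.Perm (Fin r)) (i : Fin n) (ι : Fin r → Fin n) :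
    (Fin.cons i ι : Fin (r+1) → Fin n) ∘ (liftPerm τ) = Fin.cons i (ι ∘ τ) := by
  funext x
  refine Fin.cases ?_ (fun y => ?_) x <;> simp [liftPerm]

lemma Sym.tail {r : ℕ} {c : (Fin (r+1) → Fin n) → ℝ} (hc : Sym c) (i : Fin n) :
    Sym (fun ι => c (Fin.cons i ι)) := by
  intro τ ι
  simpa [cons_comp_liftPerm] using hc (liftPerm τ) (Fin.cons i ι)

lemma Sym.swap01 {r : ℕ} {c : (Fin (r+2) → Fin n) → ℝ} (hc : Sym c) (i j : Fin n)
    (ι : Fin r → Fin n) :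
    c (Fin.cons i (Fin.cons j ι)) = c (Fin.cons j (Fin.cons i ι)) := by
  have := hc (Equiv.swap 0 1) (Fin.cons j (Fin.cons i ι))
  rw [← this]
  congr 1
  funext x
  refine Fin.cases ?_ (fun y => ?_) x
  · simp
  · refine Fin.cases ?_ (fun z => ?_) y
    · simp
    · have h1 : (Equiv.swap (0 : Fin (r+2)) 1) z.succ.succ = z.succ.succ := by
        apply Equiv.swap_apply_of_ne_of_ne
        · exact (Fin.succ_ne_zero _)
        · simp [Fin.ext_iff]
      simp [h1]



lemma hasDerivAt_update_prod {r : ℕ} (ι : Fin r → Fin n) (p : Fin n → ℝ) (k : Fin n) :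
    HasDerivAt (fun x => ∏ t : Fin r, Function.update p k x (ι t))
      (∑ s : Fin r, if ι s = k then ∏ t ∈ univ.erase s, p (ι t) else 0) (p k) := by
  have h : ∀ t : Fin r, HasDerivAt (fun x => Function.update p k x (ι t))
      (if ι t = k then (1:ℝ) else 0) (p k) := by
    intro t
    by_cases h : ι t = k
    · subst h
      have : (fun x : ℝ => Function.update p (ι t) x (ι t)) = fun x => x := by
        funext x; simp
      rw [this, if_pos rfl]
      exact hasDerivAt_id _
    · simp only [h, if_neg, not_false_iff]
      have : (fun x : ℝ => Function.update p k x (ι t)) = fun _ => p (ι t) := by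
        funext x; simp [Function.update_of_ne h]
      rw [this]
      exact hasDerivAt_const _ _
  have := HasDerivAt.fun_finsetProd (u := univ) (fun t _ => h t)
  refine this.congr_deriv ?_
  refine Finset.sum_congr rfl fun s _ => ?_
  simp [Function.update_eq_self, smul_eq_mul, mul_ite, mul_one, mul_zero]

lemma prod_erase_zero {r : ℕ} (f : Fin (r+1) → ℝ) :
    ∏ t ∈ univ.erase (0 : Fin (r+1)), f t = ∏ t : Fin r, f t.succ := by
  rw [Fin.univ_succ, Finset.erase_cons, Finset.prod_map]
  rfl

lemma contract_zero {r : ℕ} (c : (Fin (r+1) → Fin n) → ℝ) (k : Fin n) (p : Fin n → ℝ) :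
    ∑ ι : Fin (r+1) → Fin n, c ι * (if ι 0 = k then ∏ t ∈ univ.erase (0:Fin (r+1)), p (ι t) else 0)
      = SS (fun ι => c (Fin.cons k ι)) p := by
  rw [sum_pi_succ (fun ι => c ι * (if ι 0 = k then ∏ t ∈ univ.erase (0:Fin (r+1)), p (ι t) else 0))]
  rw [Finset.sum_eq_single k]
  · rw [SS]
    refine Finset.sum_congr rfl fun ι _ => ?_
    rw [Fin.cons_zero, if_pos rfl, prod_erase_zero]
    simp
  · intro b _ hb
    simp [hb]
  · simp

lemma contract_at {r : ℕ} {c : (Fin (r+1) → Fin n) → ℝ} (hc : Sym c) (s : Fin (r+1))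
    (k : Fin n) (p : Fin n → ℝ) :
    ∑ ι : Fin (r+1) → Fin n, c ι * (if ι s = k then ∏ t ∈ univ.erase s, p (ι t) else 0)
      = SS (fun ι => c (Fin.cons k ι)) p := by
  rw [← contract_zero c k p]
  refine Fintype.sum_equiv ((Equiv.swap (0:Fin (r+1)) s).arrowCongr (Equiv.refl (Fin n)))
    _ _ (fun ι => ?_)
  have hcomp : ((Equiv.swap (0:Fin (r+1)) s).arrowCongr (Equiv.refl (Fin n))) ι
      = ι ∘ (Equiv.swap (0:Fin (r+1)) s) := by
    funext x; simp [Equiv.arrowCongr, Equiv.symm_swap]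
  rw [hcomp, hc]
  congr 1
  have h0 : (ι ∘ (Equiv.swap (0:Fin (r+1)) s)) 0 = ι s := by simp
  rw [Function.comp_apply, Equiv.swap_apply_left]
  by_cases h : ι s = k
  · rw [if_pos h, if_pos h]
    refine Finset.prod_nbij' (fun t => (Equiv.swap (0:Fin (r+1)) s) t)
      (fun t => (Equiv.swap (0:Fin (r+1)) s) t) ?_ ?_ ?_ ?_ ?_
    · intro t ht
      simp only [mem_erase, mem_univ, and_true] at ht ⊢
      intro hts
      apply ht
      have := (Equiv.apply_eq_iff_eq_symm_apply _).mp hts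
      simpa using this
    · intro t ht
      simp only [mem_erase, mem_univ, and_true] at ht ⊢
      intro hts
      apply ht
      have := (Equiv.apply_eq_iff_eq_symm_apply _).mp hts
      simpa using this
    · intro t _; simp
    · intro t _; simp
    · intro t _; simp
  · rw [if_neg h, if_neg h]

lemma hasDerivAt_SS {r : ℕ} {c : (Fin (r+1) → Fin n) → ℝ} (hc : Sym c) (k : Fin n)
    (p : Fin n → ℝ) :
    HasDerivAt (fun x => SS c (Function.update p k x))
      ((r+1 : ℝ) * SS (fun ι => c (Fin.cons k ι)) p) (p k) := by
  have h1 : HasDerivAt (fun x => SS c (Function.update p k x))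
      (∑ ι : Fin (r+1) → Fin n, c ι *
        (∑ s : Fin (r+1), if ι s = k then ∏ t ∈ univ.erase s, p (ι t) else 0)) (p k) := by
    unfold SS
    exact HasDerivAt.fun_sum fun ι _ => (hasDerivAt_update_prod ι p k).const_mul (c ι)
  convert h1 using 1
  have : ∑ ι : Fin (r+1) → Fin n, c ι *
        (∑ s : Fin (r+1), if ι s = k then ∏ t ∈ univ.erase s, p (ι t) else 0)
      = ∑ s : Fin (r+1), ∑ ι : Fin (r+1) → Fin n,
        c ι * (if ι s = k then ∏ t ∈ univ.erase s, p (ι t) else 0) := by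
    rw [Finset.sum_comm]
    refine Finset.sum_congr rfl fun ι _ => (Finset.mul_sum _ _ _)
  rw [this]
  rw [Finset.sum_congr rfl fun s _ => contract_at hc s k p]
  simp [Finset.sum_const, nsmul_eq_mul]

variable {M : ℕ}

lemma symA {a : (Fin (M + 3) → Fin n) → ℝ} (hsym : aSym a) : Sym a := hsym

lemma Kpos {a : (Fin (M + 3) → Fin n) → ℝ} {q : Fin n → ℝ} (hq : 0 < Afun a q) :
    0 < Kfun a q := Real.rpow_pos_of_pos hq _

lemma Kpow {a : (Fin (M + 3) → Fin n) → ℝ} {q : Fin n → ℝ} (hq : 0 < Afun a q) (r : ℕ) :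
    Kfun a q ^ r = Afun a q ^ ((r : ℝ)/(M+3)) := by
  rw [Kfun, ← Real.rpow_natCast (Afun a q ^ ((1:ℝ)/(M+3))) r, ← Real.rpow_mul hq.le]
  congr 1
  ring

lemma hasDerivAt_K {a : (Fin (M + 3) → Fin n) → ℝ} (hsym : aSym a) {q : Fin n → ℝ}
    (hq : 0 < Afun a q) (k : Fin n) :
    HasDerivAt (fun x => Kfun a (Function.update q k x)) (aU1 a k q) (q k) := by
  have hS : HasDerivAt (fun x => Afun a (Function.update q k x))
      ((M+2+1 : ℝ) * SS (fun ι => a (Fin.cons k ι)) q) (q k) := by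
    have := hasDerivAt_SS (symA hsym) k q
    refine this.congr_deriv ?_
    push_cast
    ring
  have h2 := hS.rpow_const (p := 1/(M+3:ℝ)) (by rw [Function.update_eq_self]; exact Or.inl hq.ne')
  rw [Function.update_eq_self] at h2
  refine h2.congr_deriv ?_
  rw [aU1]
  have hKp : Kfun a q ^ (M+2) = Afun a q ^ (((M+2:ℕ) : ℝ)/(M+3)) := Kpow hq (M+2)
  rw [show (∑ ι : Fin (M + 2) → Fin n, a (Fin.cons k ι) * ∏ t, q (ι t))
      = SS (fun ι => a (Fin.cons k ι)) q from rfl, hKp]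
  have h3 : (M+3:ℝ) ≠ 0 := by positivity
  have he : (1/(M+3:ℝ) - 1) = -(((M+2:ℕ):ℝ)/(M+3)) := by
    field_simp
    push_cast
    ring
  rw [he, Real.rpow_neg hq.le]
  have hAne : Afun a q ^ (((M+2:ℕ):ℝ)/(M+3)) ≠ 0 := by positivity
  field_simp
  push_cast
  ring

variable {a : (Fin (M + 3) → Fin n) → ℝ} {q p : Fin n → ℝ}

lemma Kne (hq : 0 < Afun a q) : Kfun a q ≠ 0 := (Kpos hq).ne'

lemma SS1_eq (hq : 0 < Afun a q) (i : Fin n) :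
    SS (fun ι => a (Fin.cons i ι)) q = aU1 a i q * Kfun a q ^ (M+2) := by
  rw [aU1]
  field_simp [pow_ne_zero _ (Kne hq)]
  rfl

lemma SS2_eq (hq : 0 < Afun a q) (i j : Fin n) :
    SS (fun ι => a (Fin.cons i (Fin.cons j ι))) q = aU2 a i j q * Kfun a q ^ (M+1) := by
  rw [aU2]
  field_simp [pow_ne_zero _ (Kne hq)]
  rfl

lemma SS3_eq (hq : 0 < Afun a q) (i j k : Fin n) :
    SS (fun ι => a (Fin.cons i (Fin.cons j (Fin.cons k ι)))) q
      = aU3 a i j k q * Kfun a q ^ M := by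
  rw [aU3]
  field_simp [pow_ne_zero _ (Kne hq)]
  rfl

lemma hasDerivAt_aU1 (hsym : aSym a) (hq : 0 < Afun a q) (i j : Fin n) :
    HasDerivAt (fun x => aU1 a i (Function.update q j x))
      ((M+2:ℝ)*(aU2 a i j q - aU1 a i q * aU1 a j q)/Kfun a q) (q j) := by
  have h1 : HasDerivAt (fun x => SS (fun ι => a (Fin.cons i ι)) (Function.update q j x))
      ((M+1+1 : ℝ) * SS (fun ι => a (Fin.cons i (Fin.cons j ι))) q) (q j) := by
    have := hasDerivAt_SS (c := fun ι => a (Fin.cons i ι)) ((symA hsym).tail i) j q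
    refine this.congr_deriv ?_
    push_cast
    ring
  have h2 : HasDerivAt (fun x => Kfun a (Function.update q j x) ^ (M+2))
      (((M+2:ℕ):ℝ) * Kfun a q ^ (M+1) * aU1 a j q) (q j) := by
    have := (hasDerivAt_K hsym hq j).pow (M+2)
    simp only [Function.update_eq_self] at this
    refine this.congr_deriv ?_
    rfl
  have h3 := h1.div h2 (by rw [Function.update_eq_self]; exact pow_ne_zero _ (Kne hq))
  simp only [Function.update_eq_self] at h3
  have hfun : (fun x => aU1 a i (Function.update q j x))
      = fun x => SS (fun ι => a (Fin.cons i ι)) (Function.update q j x) /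
          Kfun a (Function.update q j x) ^ (M+2) := rfl
  rw [hfun]
  refine h3.congr_deriv ?_
  rw [SS1_eq hq, SS2_eq hq]
  have hK := Kne hq
  field_simp
  push_cast
  ring

lemma hasDerivAt_aU2 (hsym : aSym a) (hq : 0 < Afun a q) (i j k : Fin n) :
    HasDerivAt (fun x => aU2 a i j (Function.update q k x))
      ((M+1:ℝ)*(aU3 a i j k q - aU2 a i j q * aU1 a k q)/Kfun a q) (q k) := by
  have h1 : HasDerivAt (fun x => SS (fun ι => a (Fin.cons i (Fin.cons j ι)))
        (Function.update q k x))
      ((M+0+1 : ℝ) * SS (fun ι => a (Fin.cons i (Fin.cons j (Fin.cons k ι)))) q) (q k) := by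
    have := hasDerivAt_SS (c := fun ι => a (Fin.cons i (Fin.cons j ι)))
      (((symA hsym).tail i).tail j) k q
    refine this.congr_deriv ?_
    push_cast
    ring
  have h2 : HasDerivAt (fun x => Kfun a (Function.update q k x) ^ (M+1))
      (((M+1:ℕ):ℝ) * Kfun a q ^ M * aU1 a k q) (q k) := by
    have := (hasDerivAt_K hsym hq k).pow (M+1)
    simp only [Function.update_eq_self] at this
    refine this.congr_deriv ?_
    rfl
  have h3 := h1.div h2 (by rw [Function.update_eq_self]; exact pow_ne_zero _ (Kne hq))
  simp only [Function.update_eq_self] at h3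
  have hfun : (fun x => aU2 a i j (Function.update q k x))
      = fun x => SS (fun ι => a (Fin.cons i (Fin.cons j ι))) (Function.update q k x) /
          Kfun a (Function.update q k x) ^ (M+1) := rfl
  rw [hfun]
  refine h3.congr_deriv ?_
  rw [SS2_eq hq, SS3_eq hq]
  have hK := Kne hq
  field_simp
  push_cast
  ring

lemma contA (q : Fin n → ℝ) (k : Fin n) :
    Continuous (fun x : ℝ => Afun a (Function.update q k x)) := by
  have hcoord : ∀ i : Fin n, Continuous fun x : ℝ => Function.update q k x i := by
    intro i
    by_cases h : i = k
    · subst h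
      simpa using continuous_id'
    · simpa [Function.update_of_ne h] using continuous_const
  unfold Afun
  exact continuous_finset_sum _ fun ι _ =>
    (continuous_const.mul (continuous_finset_prod _ fun t _ => hcoord (ι t)))

lemma eventually_pos (hq : 0 < Afun a q) (k : Fin n) :
    ∀ᶠ x in nhds (q k), 0 < Afun a (Function.update q k x) := by
  have h := (contA (a := a) q k).continuousAt (x := q k)
  have h2 : Afun a (Function.update q k (q k)) = Afun a q := by rw [Function.update_eq_self]
  have h3 : ContinuousAt (fun _ : ℝ => (0:ℝ)) (q k) := continuousAt_const
  have := ContinuousAt.eventually_lt h3 h (by rw [h2]; exact hq)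
  exact this

lemma pd_K (hsym : aSym a) (hq : 0 < Afun a q) (k : Fin n) :
    pd (Kfun a) k q = aU1 a k q := (hasDerivAt_K hsym hq k).deriv

lemma aU2_comm (hsym : aSym a) (i j : Fin n) :
    aU2 a j i q = aU2 a i j q := by
  rw [aU2, aU2]
  congr 1
  exact Finset.sum_congr rfl fun ι _ => by rw [(symA hsym).swap01 j i ι]

lemma hU_eq (hsym : aSym a) (hp : 0 < Afun a p) (i j : Fin n) :
    hU a i j p = (M+2:ℝ) * (aU2 a i j p - aU1 a i p * aU1 a j p) := by
  rw [hU, pd]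
  have hev : (fun t => pd (Kfun a) j (Function.update p i t))
      =ᶠ[nhds (p i)] (fun t => aU1 a j (Function.update p i t)) := by
    filter_upwards [eventually_pos hp i] with t ht
    exact pd_K hsym ht j
  rw [hev.deriv_eq, (hasDerivAt_aU1 hsym hp j i).deriv, aU2_comm hsym]
  field_simp [Kne hp]

lemma gU_eq (hsym : aSym a) (hp : 0 < Afun a p) (i j : Fin n) :
    gU a i j p = (M+2:ℝ) * aU2 a i j p - (M+1:ℝ) * aU1 a i p * aU1 a j p := by
  rw [gU, pd]
  have hKsq : ∀ q : Fin n → ℝ, 0 < Afun a q → ∀ jj : Fin n,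
      pd (fun r => Kfun a r ^ 2) jj q = 2 * Kfun a q * aU1 a jj q := by
    intro q hq jj
    have h := (hasDerivAt_K hsym hq jj).pow 2
    simp only [Function.update_eq_self] at h
    have : (fun x => Kfun a (Function.update q jj x) ^ 2)
        = fun x => (fun r => Kfun a r ^ 2) (Function.update q jj x) := rfl
    rw [pd, HasDerivAt.deriv (f := fun x => Kfun a (Function.update q jj x) ^ 2) h]
    ring
  have hev : (fun t => pd (fun r => Kfun a r ^ 2) j (Function.update p i t))
      =ᶠ[nhds (p i)] (fun t => 2 * Kfun a (Function.update p i t) * aU1 a j (Function.update p i t)) := by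
    filter_upwards [eventually_pos hp i] with t ht
    exact hKsq _ ht j
  rw [hev.deriv_eq]
  have hd : HasDerivAt (fun t => 2 * Kfun a (Function.update p i t) * aU1 a j (Function.update p i t))
      (2 * (aU1 a i p * aU1 a j p) +
        2 * Kfun a p * ((M+2:ℝ)*(aU2 a j i p - aU1 a j p * aU1 a i p)/Kfun a p)) (p i) := by
    have h1 := (hasDerivAt_K hsym hp i).const_mul 2
    have h2 := hasDerivAt_aU1 hsym hp j i
    have := h1.mul h2
    simp only [Function.update_eq_self] at this
    refine this.congr_deriv ?_
    ring
  rw [hd.deriv]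
  rw [aU2_comm hsym]
  field_simp [Kne hp]
  ring

lemma CU_eq (hsym : aSym a) (hp : 0 < Afun a p) (i j k : Fin n) :
    CU a i j k p = -((M+2:ℝ)*(M+1)/(2*Kfun a p)) *
      (aU3 a i j k p - aU2 a i j p * aU1 a k p - aU2 a i k p * aU1 a j p
        - aU2 a j k p * aU1 a i p + 2 * aU1 a i p * aU1 a j p * aU1 a k p) := by
  rw [CU, pd]
  have hev : (fun t => gU a i j (Function.update p k t))
      =ᶠ[nhds (p k)] (fun t => (M+2:ℝ) * aU2 a i j (Function.update p k t)
        - (M+1:ℝ) * aU1 a i (Function.update p k t) * aU1 a j (Function.update p k t)) := by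
    filter_upwards [eventually_pos hp k] with t ht
    exact gU_eq hsym ht i j
  rw [hev.deriv_eq]
  have h2 := (hasDerivAt_aU2 hsym hp i j k).const_mul (M+2:ℝ)
  have h1i := hasDerivAt_aU1 hsym hp i k
  have h1j := hasDerivAt_aU1 hsym hp j k
  have hd := h2.sub (((h1i.const_mul (M+1:ℝ)).mul h1j))
  simp only [Function.update_eq_self] at hd
  rw [HasDerivAt.deriv (f := fun t => (M+2:ℝ) * aU2 a i j (Function.update p k t)
    - (M+1:ℝ) * aU1 a i (Function.update p k t) * aU1 a j (Function.update p k t)) hd]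
  field_simp [Kne hp]
  ring

section Key
variable {A1 : Fin n → ℝ} {A2 : Fin n → Fin n → ℝ}
  {A3 : Fin n → Fin n → Fin n → ℝ} {Z : Fin n → Fin n → Fin n → ℝ} {q : Fin n → ℝ}

lemma keyXY
    (hc4 : ∀ u i j, ∑ r, Z r i j * A2 r u = A3 u i j)
    (hc5 : ∀ i j, ∑ r, Z r i j * A1 r = A2 i j)
    (hc6 : ∀ u v, ∑ r, q r * (A3 r u v - A2 r u * A1 v - A2 r v * A1 u
      - A2 u v * A1 r + 2 * A1 r * A1 u * A1 v) = 0)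
    (h i j k : Fin n) :
    ∑ r, ((Z r i j - (if r = i then A1 j else 0) - (if r = j then A1 i else 0)
        - A2 i j * q r + 2 * q r * A1 i * A1 j) *
      (A3 r h k - A2 r h * A1 k - A2 r k * A1 h - A2 h k * A1 r + 2 * A1 r * A1 h * A1 k))
    = (∑ r, Z r i j * A3 r h k) - A3 h i j * A1 k - A3 k i j * A1 h - A2 i j * A2 h k
      + A2 i j * (2 * A1 h * A1 k)
      - A1 j * (A3 i h k - A2 i h * A1 k - A2 i k * A1 h - A2 h k * A1 i
          + 2 * A1 i * A1 h * A1 k)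
      - A1 i * (A3 j h k - A2 j h * A1 k - A2 j k * A1 h - A2 h k * A1 j
          + 2 * A1 j * A1 h * A1 k) := by
  have hpt : ∀ r : Fin n,
      ((Z r i j - (if r = i then A1 j else 0) - (if r = j then A1 i else 0)
        - A2 i j * q r + 2 * q r * A1 i * A1 j) *
      (A3 r h k - A2 r h * A1 k - A2 r k * A1 h - A2 h k * A1 r + 2 * A1 r * A1 h * A1 k))
      = Z r i j * A3 r h k
        - (Z r i j * A2 r h) * A1 k
        - (Z r i j * A2 r k) * A1 h
        - (Z r i j * A1 r) * A2 h k
        + (Z r i j * A1 r) * (2 * A1 h * A1 k)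
        - (if r = i then A1 j * (A3 r h k - A2 r h * A1 k - A2 r k * A1 h - A2 h k * A1 r
            + 2 * A1 r * A1 h * A1 k) else 0)
        - (if r = j then A1 i * (A3 r h k - A2 r h * A1 k - A2 r k * A1 h - A2 h k * A1 r
            + 2 * A1 r * A1 h * A1 k) else 0)
        - A2 i j * (q r * (A3 r h k - A2 r h * A1 k - A2 r k * A1 h - A2 h k * A1 r
            + 2 * A1 r * A1 h * A1 k))
        + 2 * A1 i * A1 j * (q r * (A3 r h k - A2 r h * A1 k - A2 r k * A1 h - A2 h k * A1 r
            + 2 * A1 r * A1 h * A1 k)) := by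
    intro r
    split_ifs <;> ring
  rw [Finset.sum_congr rfl fun r _ => hpt r]
  simp only [Finset.sum_add_distrib, Finset.sum_sub_distrib, ← Finset.sum_mul, ← Finset.mul_sum]
  rw [hc4 h i j, hc4 k i j, hc5 i j, hc6 h k,
    Finset.sum_ite_eq' univ i (fun r => A1 j * (A3 r h k - A2 r h * A1 k - A2 r k * A1 h
      - A2 h k * A1 r + 2 * A1 r * A1 h * A1 k)),
    Finset.sum_ite_eq' univ j (fun r => A1 i * (A3 r h k - A2 r h * A1 k - A2 r k * A1 h
      - A2 h k * A1 r + 2 * A1 r * A1 h * A1 k))]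
  simp only [mem_univ, if_pos]
  ring


lemma key
    (hA2 : ∀ x y, A2 x y = A2 y x)
    (hA3a : ∀ x y z, A3 x y z = A3 y x z)
    (hA3b : ∀ x y z, A3 x y z = A3 x z y)
    (hc4 : ∀ u i j, ∑ r, Z r i j * A2 r u = A3 u i j)
    (hc5 : ∀ i j, ∑ r, Z r i j * A1 r = A2 i j)
    (hc6 : ∀ u v, ∑ r, q r * (A3 r u v - A2 r u * A1 v - A2 r v * A1 u
      - A2 u v * A1 r + 2 * A1 r * A1 u * A1 v) = 0)
    (h i j k : Fin n) :
    ∑ r, ((Z r i j - (if r = i then A1 j else 0) - (if r = j then A1 i else 0)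
        - A2 i j * q r + 2 * q r * A1 i * A1 j) *
      (A3 r h k - A2 r h * A1 k - A2 r k * A1 h - A2 h k * A1 r + 2 * A1 r * A1 h * A1 k)
      - (Z r i k - (if r = i then A1 k else 0) - (if r = k then A1 i else 0)
        - A2 i k * q r + 2 * q r * A1 i * A1 k) *
      (A3 r h j - A2 r h * A1 j - A2 r j * A1 h - A2 h j * A1 r + 2 * A1 r * A1 h * A1 j))
    = (A2 h j - A1 h * A1 j) * (A2 i k - A1 i * A1 k)
      - (A2 h k - A1 h * A1 k) * (A2 i j - A1 i * A1 j)
      + ∑ r, (Z r i j * A3 r h k - Z r i k * A3 r h j) := by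
  have h3 : ∀ x y z, A3 x y z = A3 z y x := fun x y z => by rw [hA3a, hA3b, hA3a]
  rw [Finset.sum_sub_distrib, Finset.sum_sub_distrib,
    keyXY hc4 hc5 hc6 h i j k, keyXY hc4 hc5 hc6 h i k j]
  rw [hA3a i h j, hA3a i h k, h3 j i k, h3 k h j, hA2 i h, hA2 j h, hA2 k h, hA2 k j]
  ring

end Key

variable {aLow : Matrix (Fin n) (Fin n) ℝ}

lemma KpowA (hp : 0 < Afun a p) : Kfun a p ^ (M+3) = Afun a p := by
  rw [Kpow hp (M+3)]
  have h3 : (M+3:ℝ) ≠ 0 := by positivity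
  rw [show ((M+3:ℕ):ℝ)/((M:ℝ)+3) = 1 by push_cast; field_simp, Real.rpow_one]

lemma sum_p_aU1 (hp : 0 < Afun a p) : ∑ i, p i * aU1 a i p = Kfun a p := by
  refine mul_right_cancel₀ (pow_ne_zero (M+2) (Kne hp)) ?_
  rw [Finset.sum_mul]
  have h1 : ∀ i : Fin n, p i * aU1 a i p * Kfun a p ^ (M+2)
      = p i * SS (fun ι => a (Fin.cons i ι)) p := by
    intro i; rw [SS1_eq hp]; ring
  rw [Finset.sum_congr rfl fun i _ => h1 i, ← SS_cons a p,
    show SS a p = Afun a p from rfl, ← KpowA hp]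
  ring

lemma sum_p_aU2 (hp : 0 < Afun a p) (i : Fin n) :
    ∑ j, p j * aU2 a i j p = Kfun a p * aU1 a i p := by
  refine mul_right_cancel₀ (pow_ne_zero (M+1) (Kne hp)) ?_
  rw [Finset.sum_mul]
  have h1 : ∀ j : Fin n, p j * aU2 a i j p * Kfun a p ^ (M+1)
      = p j * SS (fun ι => a (Fin.cons i (Fin.cons j ι))) p := by
    intro j; rw [SS2_eq hp]; ring
  rw [Finset.sum_congr rfl fun j _ => h1 j,
    ← SS_cons (fun ι => a (Fin.cons i ι)) p, SS1_eq hp]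
  ring

lemma sum_p_aU3 (hp : 0 < Afun a p) (i j : Fin n) :
    ∑ k, p k * aU3 a i j k p = Kfun a p * aU2 a i j p := by
  refine mul_right_cancel₀ (pow_ne_zero M (Kne hp)) ?_
  rw [Finset.sum_mul]
  have h1 : ∀ k : Fin n, p k * aU3 a i j k p * Kfun a p ^ M
      = p k * SS (fun ι => a (Fin.cons i (Fin.cons j (Fin.cons k ι)))) p := by
    intro k; rw [SS3_eq hp]; ring
  rw [Finset.sum_congr rfl fun k _ => h1 k,
    ← SS_cons (fun ι => a (Fin.cons i (Fin.cons j ι))) p, SS2_eq hp]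
  ring

lemma aU3_comm12 (hsym : aSym a) (x y z : Fin n) : aU3 a x y z p = aU3 a y x z p := by
  rw [aU3, aU3]
  congr 1
  exact Finset.sum_congr rfl fun ι _ => by
    rw [(symA hsym).swap01 x y (Fin.cons z ι)]

lemma aU3_comm23 (hsym : aSym a) (x y z : Fin n) : aU3 a x y z p = aU3 a x z y p := by
  rw [aU3, aU3]
  congr 1
  exact Finset.sum_congr rfl fun ι _ => by
    rw [((symA hsym).tail x).swap01 y z ι]

lemma inv1 (hInv₁ : (Matrix.of fun i j => aU2 a i j p) * aLow = 1) (i j : Fin n) :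
    ∑ s, aU2 a i s p * aLow s j = if i = j then 1 else 0 := by
  have := congrFun (congrFun hInv₁ i) j
  rw [Matrix.mul_apply] at this
  simpa [Matrix.one_apply] using this

lemma inv2 (hInv₂ : aLow * (Matrix.of fun i j => aU2 a i j p) = 1) (i j : Fin n) :
    ∑ s, aLow i s * aU2 a s j p = if i = j then 1 else 0 := by
  have := congrFun (congrFun hInv₂ i) j
  rw [Matrix.mul_apply] at this
  simpa [Matrix.one_apply] using this

lemma lowSym (hsym : aSym a)
    (hInv₁ : (Matrix.of fun i j => aU2 a i j p) * aLow = 1)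
    (hInv₂ : aLow * (Matrix.of fun i j => aU2 a i j p) = 1) (i j : Fin n) :
    aLow i j = aLow j i := by
  have hA2T : Matrix.transpose (Matrix.of (fun i j => aU2 a i j p))
      = Matrix.of (fun i j => aU2 a i j p) := by
    ext x y
    simp [Matrix.transpose_apply, aU2_comm (q := p) hsym]
  have hT : Matrix.transpose aLow = aLow := by
    calc Matrix.transpose aLow
        = Matrix.transpose aLow * ((Matrix.of fun i j => aU2 a i j p) * aLow) := by
          rw [hInv₁, mul_one]
      _ = (Matrix.transpose aLow * Matrix.transpose (Matrix.of fun i j => aU2 a i j p)) * aLow := by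
          rw [Matrix.mul_assoc, hA2T]
      _ = Matrix.transpose ((Matrix.of fun i j => aU2 a i j p) * aLow) * aLow := by
          rw [Matrix.transpose_mul]
      _ = aLow := by rw [hInv₁, Matrix.transpose_one, Matrix.one_mul]
  exact (congrFun (congrFun hT i) j).symm

lemma aL_eq (hp : 0 < Afun a p)
    (hInv₂ : aLow * (Matrix.of fun i j => aU2 a i j p) = 1) (i : Fin n) :
    aL a aLow p i = p i / Kfun a p := by
  have hK := Kne hp
  rw [aL, eq_div_iff hK, Finset.sum_mul]
  have h1 : ∀ s : Fin n, aLow i s * aU1 a s p * Kfun a p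
      = ∑ t, p t * (aLow i s * aU2 a s t p) := by
    intro s
    have := sum_p_aU2 (a := a) hp s
    calc aLow i s * aU1 a s p * Kfun a p = aLow i s * (Kfun a p * aU1 a s p) := by ring
      _ = aLow i s * ∑ t, p t * aU2 a s t p := by rw [this]
      _ = ∑ t, p t * (aLow i s * aU2 a s t p) := by
          rw [Finset.mul_sum]
          exact Finset.sum_congr rfl fun t _ => by ring
  rw [Finset.sum_congr rfl fun s _ => h1 s, Finset.sum_comm]
  have h2 : ∀ t : Fin n, ∑ s, p t * (aLow i s * aU2 a s t p)
      = p t * (if i = t then 1 else 0) := by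
    intro t
    rw [← Finset.mul_sum, inv2 hInv₂ i t]
  rw [Finset.sum_congr rfl fun t _ => h2 t]
  simp

lemma hc1' (hsym : aSym a) (hp : 0 < Afun a p) (u v : Fin n) :
    ∑ r, (p r / Kfun a p) * aU3 a r u v p = aU2 a u v p := by
  have hK := Kne hp
  have h2 : ∑ r, p r * aU3 a r u v p = Kfun a p * aU2 a u v p := by
    have hsw : ∀ r : Fin n, aU3 a r u v p = aU3 a u v r p := by
      intro r
      rw [aU3_comm12 hsym r u v, aU3_comm23 hsym u r v]
    rw [Finset.sum_congr rfl fun r _ => by rw [hsw r]]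
    exact sum_p_aU3 hp u v
  calc ∑ r, (p r / Kfun a p) * aU3 a r u v p
      = (∑ r, p r * aU3 a r u v p) / Kfun a p := by
        rw [Finset.sum_div]
        exact Finset.sum_congr rfl fun r _ => by ring
    _ = aU2 a u v p := by rw [h2]; field_simp

lemma hc2' (hsym : aSym a) (hp : 0 < Afun a p) (u : Fin n) :
    ∑ r, (p r / Kfun a p) * aU2 a r u p = aU1 a u p := by
  have hK := Kne hp
  have h2 : ∑ r, p r * aU2 a r u p = Kfun a p * aU1 a u p := by
    rw [Finset.sum_congr rfl fun r _ => by rw [aU2_comm (q := p) hsym]]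
    exact sum_p_aU2 hp u
  calc ∑ r, (p r / Kfun a p) * aU2 a r u p
      = (∑ r, p r * aU2 a r u p) / Kfun a p := by
        rw [Finset.sum_div]
        exact Finset.sum_congr rfl fun r _ => by ring
    _ = aU1 a u p := by rw [h2]; field_simp

lemma hc3' (hp : 0 < Afun a p) : ∑ r, (p r / Kfun a p) * aU1 a r p = 1 := by
  have hK := Kne hp
  calc ∑ r, (p r / Kfun a p) * aU1 a r p
      = (∑ r, p r * aU1 a r p) / Kfun a p := by
        rw [Finset.sum_div]
        exact Finset.sum_congr rfl fun r _ => by ring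
    _ = 1 := by rw [sum_p_aU1 hp]; field_simp

lemma hc4' (hsym : aSym a)
    (hInv₁ : (Matrix.of fun i j => aU2 a i j p) * aLow = 1) (u i j : Fin n) :
    ∑ r, aL3 a aLow p r i j * aU2 a r u p = aU3 a u i j p := by
  have hpt : ∀ r : Fin n, aL3 a aLow p r i j * aU2 a r u p
      = ∑ s, aU2 a u r p * aLow r s * aU3 a s i j p := by
    intro r
    rw [aL3, Finset.sum_mul]
    exact Finset.sum_congr rfl fun s _ => by
      rw [aU2_comm (q := p) hsym u r]; ring
  rw [Finset.sum_congr rfl fun r _ => hpt r, Finset.sum_comm]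
  have h2 : ∀ s : Fin n, ∑ r, aU2 a u r p * aLow r s * aU3 a s i j p
      = (if u = s then 1 else 0) * aU3 a s i j p := by
    intro s
    rw [← Finset.sum_mul, inv1 hInv₁ u s]
  rw [Finset.sum_congr rfl fun s _ => h2 s]
  simp

lemma hc5' (hsym : aSym a) (hp : 0 < Afun a p)
    (hInv₁ : (Matrix.of fun i j => aU2 a i j p) * aLow = 1)
    (hInv₂ : aLow * (Matrix.of fun i j => aU2 a i j p) = 1) (i j : Fin n) :
    ∑ r, aL3 a aLow p r i j * aU1 a r p = aU2 a i j p := by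
  have hpt : ∀ r : Fin n, aL3 a aLow p r i j * aU1 a r p
      = ∑ s, aLow r s * aU1 a r p * aU3 a s i j p := by
    intro r
    rw [aL3, Finset.sum_mul]
    exact Finset.sum_congr rfl fun s _ => by ring
  rw [Finset.sum_congr rfl fun r _ => hpt r, Finset.sum_comm]
  have h2 : ∀ s : Fin n, ∑ r, aLow r s * aU1 a r p * aU3 a s i j p
      = (p s / Kfun a p) * aU3 a s i j p := by
    intro s
    rw [← Finset.sum_mul]
    have : ∑ r, aLow r s * aU1 a r p = p s / Kfun a p := by
      rw [Finset.sum_congr rfl fun r _ => by rw [lowSym hsym hInv₁ hInv₂ r s]]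
      exact aL_eq hp hInv₂ s
    rw [this]
  rw [Finset.sum_congr rfl fun s _ => h2 s]
  exact hc1' hsym hp i j

lemma hc6' (hsym : aSym a) (hp : 0 < Afun a p) (u v : Fin n) :
    ∑ r, (p r / Kfun a p) * (aU3 a r u v p - aU2 a r u p * aU1 a v p
      - aU2 a r v p * aU1 a u p - aU2 a u v p * aU1 a r p
      + 2 * aU1 a r p * aU1 a u p * aU1 a v p) = 0 := by
  have hpt : ∀ r : Fin n, (p r / Kfun a p) * (aU3 a r u v p - aU2 a r u p * aU1 a v p
      - aU2 a r v p * aU1 a u p - aU2 a u v p * aU1 a r p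
      + 2 * aU1 a r p * aU1 a u p * aU1 a v p)
      = (p r / Kfun a p) * aU3 a r u v p
        - ((p r / Kfun a p) * aU2 a r u p) * aU1 a v p
        - ((p r / Kfun a p) * aU2 a r v p) * aU1 a u p
        - aU2 a u v p * ((p r / Kfun a p) * aU1 a r p)
        + ((p r / Kfun a p) * aU1 a r p) * (2 * aU1 a u p * aU1 a v p) := by
    intro r; ring
  rw [Finset.sum_congr rfl fun r _ => hpt r]
  simp only [Finset.sum_add_distrib, Finset.sum_sub_distrib, ← Finset.sum_mul, ← Finset.mul_sum]
  rw [hc1' hsym hp u v, hc2' hsym hp u, hc2' hsym hp v, hc3' hp]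
  ring

lemma CL_eq (hsym : aSym a) (hp : 0 < Afun a p)
    (hInv₁ : (Matrix.of fun i j => aU2 a i j p) * aLow = 1)
    (hInv₂ : aLow * (Matrix.of fun i j => aU2 a i j p) = 1) (r j k : Fin n) :
    CL a aLow p r j k = -((M+1:ℝ)/(2*Kfun a p)) *
      (aL3 a aLow p r j k - (if r = j then aU1 a k p else 0)
        - (if r = k then aU1 a j p else 0)
        - aU2 a j k p * (p r / Kfun a p)
        + 2 * (p r / Kfun a p) * aU1 a j p * aU1 a k p) := by
  have hK := Kne hp
  have hM2 : (M+2:ℝ) ≠ 0 := by positivity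
  have hX : ∑ s, aLow r s * (aU3 a s j k p - aU2 a s j p * aU1 a k p
      - aU2 a s k p * aU1 a j p - aU2 a j k p * aU1 a s p
      + 2 * aU1 a s p * aU1 a j p * aU1 a k p)
      = aL3 a aLow p r j k - (if r = j then aU1 a k p else 0)
        - (if r = k then aU1 a j p else 0)
        - aU2 a j k p * (p r / Kfun a p)
        + 2 * (p r / Kfun a p) * aU1 a j p * aU1 a k p := by
    have hpt : ∀ s : Fin n, aLow r s * (aU3 a s j k p - aU2 a s j p * aU1 a k p
        - aU2 a s k p * aU1 a j p - aU2 a j k p * aU1 a s p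
        + 2 * aU1 a s p * aU1 a j p * aU1 a k p)
        = aLow r s * aU3 a s j k p
          - (aLow r s * aU2 a s j p) * aU1 a k p
          - (aLow r s * aU2 a s k p) * aU1 a j p
          - aU2 a j k p * (aLow r s * aU1 a s p)
          + (aLow r s * aU1 a s p) * (2 * aU1 a j p * aU1 a k p) := by
      intro s; ring
    rw [Finset.sum_congr rfl fun s _ => hpt s]
    simp only [Finset.sum_add_distrib, Finset.sum_sub_distrib, ← Finset.sum_mul,
      ← Finset.mul_sum]
    rw [show (∑ s, aLow r s * aU3 a s j k p) = aL3 a aLow p r j k from rfl,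
      inv2 hInv₂ r j, inv2 hInv₂ r k,
      show (∑ s, aLow r s * aU1 a s p) = aL a aLow p r from rfl, aL_eq hp hInv₂ r]
    split_ifs <;> ring
  have hq0 := hc6' hsym hp j k
  rw [CL]
  have hpt2 : ∀ s : Fin n, gL a aLow p r s * CU a s j k p
      = -((M+2:ℝ)*(M+1)/(2*Kfun a p)) * ((1/(M+2:ℝ)) *
          (aLow r s * (aU3 a s j k p - aU2 a s j p * aU1 a k p
            - aU2 a s k p * aU1 a j p - aU2 a j k p * aU1 a s p
            + 2 * aU1 a s p * aU1 a j p * aU1 a k p)))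
        - ((M+2:ℝ)*(M+1)/(2*Kfun a p)) * (((M+1:ℝ)/(M+2)) * (p r / Kfun a p) *
          ((p s / Kfun a p) * (aU3 a s j k p - aU2 a s j p * aU1 a k p
            - aU2 a s k p * aU1 a j p - aU2 a j k p * aU1 a s p
            + 2 * aU1 a s p * aU1 a j p * aU1 a k p))) := by
    intro s
    rw [gL, aL_eq hp hInv₂ r, aL_eq hp hInv₂ s, CU_eq hsym hp s j k]
    ring
  rw [Finset.sum_congr rfl fun s _ => hpt2 s]
  simp only [Finset.sum_sub_distrib, ← Finset.mul_sum]
  rw [hX, hq0]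
  field_simp
  ring

theorem stmt9_main (hn : 4 ≤ n) (a : (Fin (M + 3) → Fin n) → ℝ)
    (hsym : aSym a) (p : Fin n → ℝ) (hA : 0 < Afun a p)
    (aLow : Matrix (Fin n) (Fin n) ℝ)
    (hInv₁ : (Matrix.of fun i j => aU2 a i j p) * aLow = 1)
    (hInv₂ : aLow * (Matrix.of fun i j => aU2 a i j p) = 1) :
    ∀ h i j k : Fin n,
      Kfun a p ^ 2 * Scurv a aLow p h i j k =
        ((M + 1 : ℝ) ^ 2 / 4) *
          ((hU a h j p * hU a i k p - hU a h k p * hU a i j p) / (M + 2) +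
            (M + 2 : ℝ) * Ufun a aLow p h i j k) := by
  intro h i j k
  have hp := hA
  have hK := Kne hp
  have hM2 : (M+2:ℝ) ≠ 0 := by positivity
  have hS : Scurv a aLow p h i j k = ((M+2:ℝ)*((M+1)*(M+1))/(4*Kfun a p^2)) *
      (∑ r, ((aL3 a aLow p r i j - (if r = i then aU1 a j p else 0) - (if r = j then aU1 a i p else 0) - aU2 a i j p * (p r / Kfun a p) + 2 * (p r / Kfun a p) * aU1 a i p * aU1 a j p) * (aU3 a r h k p - aU2 a r h p * aU1 a k p - aU2 a r k p * aU1 a h p - aU2 a h k p * aU1 a r p + 2 * aU1 a r p * aU1 a h p * aU1 a k p) - (aL3 a aLow p r i k - (if r = i then aU1 a k p else 0) - (if r = k then aU1 a i p else 0) - aU2 a i k p * (p r / Kfun a p) + 2 * (p r / Kfun a p) * aU1 a i p * aU1 a k p) * (aU3 a r h j p - aU2 a r h p * aU1 a j p - aU2 a r j p * aU1 a h p - aU2 a h j p * aU1 a r p + 2 * aU1 a r p * aU1 a h p * aU1 a j p))) := by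
    rw [Scurv, Finset.mul_sum]
    refine Finset.sum_congr rfl fun r _ => ?_
    rw [CL_eq hsym hp hInv₁ hInv₂ r i j, CL_eq hsym hp hInv₁ hInv₂ r i k,
      CU_eq hsym hp r h k, CU_eq hsym hp r h j]
    field_simp
    ring
  have hkey : (∑ r, ((aL3 a aLow p r i j - (if r = i then aU1 a j p else 0) - (if r = j then aU1 a i p else 0) - aU2 a i j p * (p r / Kfun a p) + 2 * (p r / Kfun a p) * aU1 a i p * aU1 a j p) * (aU3 a r h k p - aU2 a r h p * aU1 a k p - aU2 a r k p * aU1 a h p - aU2 a h k p * aU1 a r p + 2 * aU1 a r p * aU1 a h p * aU1 a k p) - (aL3 a aLow p r i k - (if r = i then aU1 a k p else 0) - (if r = k then aU1 a i p else 0) - aU2 a i k p * (p r / Kfun a p) + 2 * (p r / Kfun a p) * aU1 a i p * aU1 a k p) * (aU3 a r h j p - aU2 a r h p * aU1 a j p - aU2 a r j p * aU1 a h p - aU2 a h j p * aU1 a r p + 2 * aU1 a r p * aU1 a h p * aU1 a j p))) = (aU2 a h j p - aU1 a h p * aU1 a j p) * (aU2 a i k p - aU1 a i p * aU1 a k p)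 - (aU2 a h k p - aU1 a h p * aU1 a k p) * (aU2 a i j p - aU1 a i p * aU1 a j p) + (∑ r, (aL3 a aLow p r i j * aU3 a r h k p - aL3 a aLow p r i k * aU3 a r h j p)) :=
    key (fun x y => aU2_comm (q := p) hsym y x)
      (fun x y z => aU3_comm12 (p := p) hsym x y z)
      (fun x y z => aU3_comm23 (p := p) hsym x y z)
      (fun u i j => hc4' hsym hInv₁ u i j)
      (fun i j => hc5' hsym hp hInv₁ hInv₂ i j)
      (fun u v => hc6' hsym hp u v) h i j k
  rw [hS, hkey, Ufun, hU_eq hsym hp h j, hU_eq hsym hp i k, hU_eq hsym hp h k,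
    hU_eq hsym hp i j]
  field_simp

end Stmt9

/-- `K² S^{hijk} = ((m-2)²/4) [(h^{hj}h^{ik} - h^{hk}h^{ij})/(m-1)
+ (m-1) U^{hijk}]`, where `m = M + 3`. -/
theorem stmt_9 {n M : ℕ} (hn : 4 ≤ n) (a : (Fin (M + 3) → Fin n) → ℝ)
    (hsym : aSym a) (p : Fin n → ℝ) (hA : 0 < Afun a p)
    (aLow : Matrix (Fin n) (Fin n) ℝ)
    (hInv₁ : (Matrix.of fun i j => aU2 a i j p) * aLow = 1)
    (hInv₂ : aLow * (Matrix.of fun i j => aU2 a i j p) = 1) :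
    ∀ h i j k : Fin n,
      Kfun a p ^ 2 * Scurv a aLow p h i j k =
        ((M + 1 : ℝ) ^ 2 / 4) *
          ((hU a h j p * hU a i k p - hU a h k p * hU a i j p) / (M + 2) +
            (M + 2 : ℝ) * Ufun a aLow p h i j k) :=
  Stmt9.stmt9_main hn a hsym p hA aLow hInv₁ hInv₂
end
end
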